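/- Let θ_i, θ_j, ψ_i, ψ_j, ω_i, ω_j be positive real numbers and let α ≥ 1. Define θ̆_i = α θ_i + (1−α) θ_j, θ̆_j = (1−α) θ_i + α θ_j, and similarly ψ̆_i, ψ̆_j from ψ_i, ψ_j and ω̆_i, ω̆_j from ω_i, ω_j, and assume all six transformed values θ̆_i, θ̆_j, ψ̆_i, ψ̆_j, ω̆_i, ω̆_j are positive. If (θ_i/θ_j − ψ_i/ψ_j)·(ω_i/ω_j − ψ_i/ψ_j) ≤ 0, then θ̆_i ω̆_i / ψ̆_i + θ̆_j ω̆_j / ψ̆_j ≤ θ_i ω_i / ψ_i + θ_j ω_j / ψ_j. -/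

import Mathlib

/-- Adjustment lemma, second case (`α ≥ 1`): mixing two coordinates of
`(θ, ψ, ω)` by `[[α, 1−α],[1−α, α]]` decreases the two-term sum of ratios,
under the reversed sign condition, provided the transformed entries remain
positive. -/
theorem stmt_12 (θi θj ψi ψj ωi ωj α : ℝ)
    (hθi : 0 < θi) (hθj : 0 < θj) (hψi : 0 < ψi) (hψj : 0 < ψj)
    (hωi : 0 < ωi) (hωj : 0 < ωj)
    (hα : 1 ≤ α)
    (hθi' : 0 < α * θi + (1 - α) * θj) (hθj' : 0 < (1 - α) * θi + α * θj)
    (hψi' : 0 < α * ψi + (1 - α) * ψj) (hψj' : 0 < (1 - α) * ψi + α * ψj)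
    (hωi' : 0 < α * ωi + (1 - α) * ωj) (hωj' : 0 < (1 - α) * ωi + α * ωj)
    (hsign : (θi / θj - ψi / ψj) * (ωi / ωj - ψi / ψj) ≤ 0) :
    (α * θi + (1 - α) * θj) * (α * ωi + (1 - α) * ωj) / (α * ψi + (1 - α) * ψj)
      + ((1 - α) * θi + α * θj) * ((1 - α) * ωi + α * ωj) / ((1 - α) * ψi + α * ψj)
      ≤ θi * ωi / ψi + θj * ωj / ψj := by
  have e1 : θi / θj - ψi / ψj = (θi * ψj - ψi * θj) / (θj * ψj) := by
    field_simp
  have e2 : ωi / ωj - ψi / ψj = (ωi * ψj - ψi * ωj) / (ωj * ψj) := by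
    field_simp
  rw [e1, e2, div_mul_div_comm] at hsign
  have hpos : (0:ℝ) < θj * ψj * (ωj * ψj) := by positivity
  have hs : (θi * ψj - ψi * θj) * (ωi * ψj - ψi * ωj) ≤ 0 := by
    by_contra h
    push_neg at h
    have := div_pos h hpos
    linarith
  have key : 0 ≤ α * (α - 1) * (ψi + ψj) *
      (-((θi * ψj - ψi * θj) * (ωi * ψj - ψi * ωj))) := by
    have h1 : 0 ≤ α * (α - 1) * (ψi + ψj) := by
      have : (0:ℝ) ≤ α - 1 := by linarith
      have : (0:ℝ) ≤ α * (α - 1) := by nlinarith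
      nlinarith [add_pos hψi hψj]
    exact mul_nonneg h1 (by linarith)
  rw [div_add_div _ _ (ne_of_gt hψi') (ne_of_gt hψj'),
    div_add_div _ _ (ne_of_gt hψi) (ne_of_gt hψj),
    div_le_div_iff₀ (by positivity) (by positivity)]
  nlinarith [key]
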